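/- Let x ∈ ℝ^n and w ∈ {0,…,n}. Then the sum of the w smallest entries of x equals max over t ∈ ℝ and z ∈ ℝ₋^n of (w·t + ∑ᵢ zᵢ) subject to xᵢ ≥ t + zᵢ for all i (LP-duality characterization). -/

import Mathlib

theorem stmt_6 (n w : ℕ) (hw : w ≤ n) (x : Fin n → ℝ) (s : ℝ)
    (hs : IsLeast {v | ∃ T : Finset (Fin n), T.card = w ∧ v = ∑ i ∈ T, x i} s) :
    IsGreatest {v | ∃ (t : ℝ) (z : Fin n → ℝ), (∀ i, z i ≤ 0) ∧
      (∀ i, t + z i ≤ x i) ∧ v = w * t + ∑ i, z i} s := by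
  obtain ⟨⟨T₀, hcard, hsum⟩, hlb⟩ := hs
  -- T₀ consists of smallest entries
  have key : ∀ i ∈ T₀, ∀ j ∉ T₀, x i ≤ x j := by
    intro i hi j hj
    by_contra h
    push_neg at h
    have hji : j ∉ T₀.erase i := fun hm => hj (Finset.mem_of_mem_erase hm)
    have hmem : (∑ k ∈ insert j (T₀.erase i), x k) ∈
        {v | ∃ T : Finset (Fin n), T.card = w ∧ v = ∑ i ∈ T, x i} := by
      refine ⟨_, ?_, rfl⟩
      rw [Finset.card_insert_of_notMem hji, Finset.card_erase_of_mem hi, hcard]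
      have : 1 ≤ w := by
        rw [← hcard]; exact Finset.card_pos.mpr ⟨i, hi⟩
      omega
    have hle := hlb hmem
    rw [Finset.sum_insert hji, Finset.sum_erase_eq_sub hi] at hle
    rw [hsum] at hle
    linarith
  constructor
  · -- membership
    rcases Finset.eq_empty_or_nonempty T₀ with hT | hT
    · -- w = 0 case
      have hw0 : w = 0 := by rw [← hcard, hT, Finset.card_empty]
      have hs0 : s = 0 := by rw [hsum, hT, Finset.sum_empty]
      rcases Nat.eq_zero_or_pos n with hn | hn
      · refine ⟨0, 0, fun i => le_refl 0, fun i => (Fin.elim0 (hn ▸ i)), ?_⟩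
        simp [hs0, hw0]
      · have hne : (Finset.univ : Finset (Fin n)).Nonempty := by
          simp [Finset.univ_nonempty_iff, Fin.pos_iff_nonempty.mp hn]
        refine ⟨Finset.univ.inf' hne x, 0, fun i => le_refl 0, fun i => ?_, ?_⟩
        · rw [Pi.zero_apply, add_zero]; exact Finset.inf'_le x (Finset.mem_univ i)
        · simp [hs0, hw0]
    · -- w ≥ 1 case
      refine ⟨T₀.sup' hT x, fun i => min (x i - T₀.sup' hT x) 0, fun i => min_le_right _ _,
        fun i => ?_, ?_⟩
      · dsimp only
        rcases le_or_gt (x i) (T₀.sup' hT x) with hc | hc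
        · rw [min_eq_left (by linarith)]; linarith
        · rw [min_eq_right (by linarith)]; linarith
      · have hz0 : ∀ i ∉ T₀, min (x i - T₀.sup' hT x) 0 = 0 := by
          intro i hi
          obtain ⟨j, hj, hje⟩ := Finset.exists_mem_eq_sup' hT x
          have : T₀.sup' hT x ≤ x i := by rw [hje]; exact key j hj i hi
          exact min_eq_right (by linarith)
        have hsplit : ∑ i, min (x i - T₀.sup' hT x) 0
            = ∑ i ∈ T₀, min (x i - T₀.sup' hT x) 0 := by
          rw [← Finset.sum_subset (Finset.subset_univ T₀) (fun i _ hi => hz0 i hi)]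
        rw [hsplit]
        have hT0 : ∀ i ∈ T₀, min (x i - T₀.sup' hT x) 0 = x i - T₀.sup' hT x := by
          intro i hi
          exact min_eq_left (by linarith [Finset.le_sup' x hi])
        rw [Finset.sum_congr rfl hT0, Finset.sum_sub_distrib, Finset.sum_const, hcard, hsum]
        ring
  · -- upper bound
    rintro v ⟨t, z, hz, hxt, rfl⟩
    have h1 : ∑ i, z i ≤ ∑ i ∈ T₀, z i := by
      rw [← Finset.sum_add_sum_compl T₀ z]
      have : ∑ i ∈ T₀ᶜ, z i ≤ 0 :=
        Finset.sum_nonpos (fun i _ => hz i)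
      linarith
    have h2 : (w : ℝ) * t + ∑ i ∈ T₀, z i = ∑ i ∈ T₀, (t + z i) := by
      rw [Finset.sum_add_distrib, Finset.sum_const, hcard]; ring
    have h3 : ∑ i ∈ T₀, (t + z i) ≤ ∑ i ∈ T₀, x i :=
      Finset.sum_le_sum (fun i _ => hxt i)
    rw [hsum]
    linarith
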